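/- Let G be a 2-thin graph with class partition V^1, V^2 consistent with an ordering <. Then the explicitly defined model M_1(G) (where the upper-right corner of the i-th vertex of V^1 is (i+n_2, i), the upper-right corner of the i-th vertex of V^2 is (i, i+n_1), and lower-left corners are determined by the smallest same-class neighbor and largest other-class non-neighbor indices) is a blocking 2-diagonal box intersection model of G respecting the relative order on each class; moreover, if the order and partition are strongly consistent, the model is bi-semi-proper. -/

import Mathlib

/-- An ordering (given by an injective labeling `f`) is consistent with a partition
(given by a class function `c`). -/
def ConsistentWith {V : Type*} {K : Type*} (G : SimpleGraph V) (f : V → ℕ) (c : V → K) : Prop :=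
  ∀ u v w : V, f u < f v → f v < f w → c u = c v → G.Adj w u → G.Adj w v

/-- The reverse of the ordering given by `f` is consistent with `c`. -/
def RevConsistentWith {V : Type*} {K : Type*} (G : SimpleGraph V) (f : V → ℕ) (c : V → K) : Prop :=
  ∀ u v w : V, f u < f v → f v < f w → c v = c w → G.Adj u w → G.Adj u v

/-- An axis-parallel box `[x1, x2] × [y1, y2]`, given by its coordinates. -/
structure Box where
  x1 : ℝ
  x2 : ℝ
  y1 : ℝ
  y2 : ℝ

/-- The set of points of a box. -/
def Box.toSet (b : Box) : Set (ℝ × ℝ) := Set.Icc b.x1 b.x2 ×ˢ Set.Icc b.y1 b.y2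

/-- The vertical prolongation `[x1, x2] × ℝ` of a box. -/
def Box.vert (b : Box) : Set (ℝ × ℝ) := Set.Icc b.x1 b.x2 ×ˢ (Set.univ : Set ℝ)

/-- The horizontal prolongation `ℝ × [y1, y2]` of a box. -/
def Box.horiz (b : Box) : Set (ℝ × ℝ) := (Set.univ : Set ℝ) ×ˢ Set.Icc b.y1 b.y2

/-- 2-diagonal family of boxes. -/
def TwoDiagonal {V : Type*} (box : V → Box) (d1 d2 : ℝ) : Prop :=
  d1 < 0 ∧ 0 < d2 ∧
  (∀ u v : V, u ≠ v → ((box u).x2, (box u).y2) ≠ ((box v).x2, (box v).y2)) ∧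
  ∀ v : V,
    ((box v).y2 = (box v).x2 + d1 ∧ 0 ≤ (box v).x2 ∧ (box v).y2 ≤ 0) ∨
    ((box v).y2 = (box v).x2 + d2 ∧ (box v).x2 ≤ 0 ∧ 0 ≤ (box v).y2)

/-- Blocking property of a 2-diagonal model. -/
def Blocking {V : Type*} (box : V → Box) (d1 d2 : ℝ) : Prop :=
  ∀ u v : V, (box u).y2 = (box u).x2 + d2 → (box v).y2 = (box v).x2 + d1 →
    ¬ ((box u).toSet ∩ (box v).toSet).Nonempty →
    ((box u).vert ∩ (box v).toSet).Nonempty ∨ ((box v).horiz ∩ (box u).toSet).Nonempty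

/-- `box` is a box intersection model of `G`. -/
def IsBoxModel {V : Type*} (G : SimpleGraph V) (box : V → Box) : Prop :=
  (∀ v : V, (box v).x1 ≤ (box v).x2 ∧ (box v).y1 ≤ (box v).y2) ∧
  ∀ u v : V, u ≠ v → (G.Adj u v ↔ ((box u).toSet ∩ (box v).toSet).Nonempty)

/-- Bi-semi-proper: for boxes with upper-right corners on the same diagonal and
`x2(b) < x2(b')`, one has `x1(b) ≤ x1(b')` and `y1(b) ≤ y1(b')`. -/
def BiSemiProper {V : Type*} (box : V → Box) : Prop :=
  ∀ u v : V, (box u).y2 - (box u).x2 = (box v).y2 - (box v).x2 →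
    (box u).x2 < (box v).x2 → (box u).x1 ≤ (box v).x1 ∧ (box u).y1 ≤ (box v).y1

/-- The number of vertices in class `i`. -/
noncomputable def nclass {V : Type*} (c : V → Fin 2) (i : Fin 2) : ℕ :=
  {v : V | c v = i}.ncard

/-- The (1-based) rank of `v` within its own class, with respect to the ordering `f`. -/
noncomputable def rnk {V : Type*} (c : V → Fin 2) (f : V → ℕ) (v : V) : ℕ :=
  {u : V | c u = c v ∧ f u ≤ f v}.ncard

/-- `U` within the own class of `v`: the rank of the smallest neighbor of `v` smaller
than `v` in its own class, or the rank of `v` itself if there is none. -/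
noncomputable def Uown {V : Type*} (G : SimpleGraph V) (c : V → Fin 2) (f : V → ℕ)
    (v : V) : ℕ := by
  classical
  exact if (∃ u, c u = c v ∧ f u < f v ∧ G.Adj u v) then
    sInf {j | ∃ u, c u = c v ∧ f u < f v ∧ G.Adj u v ∧ j = rnk c f u}
  else rnk c f v

/-- `U` in the other class: the largest rank of a non-neighbor of `v` smaller than `v`
in the other class, or `0` if there is none. -/
noncomputable def Uoth {V : Type*} (G : SimpleGraph V) (c : V → Fin 2) (f : V → ℕ)
    (v : V) : ℕ :=
  sSup {j | ∃ u, c u ≠ c v ∧ f u < f v ∧ ¬ G.Adj u v ∧ j = rnk c f u}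

/-- The model `M₁(G)` (translated so that the upper-right corners lie on the diagonals
`y = x - n₁` in the 4th quadrant for class `0` and `y = x + n₂` in the 2nd quadrant for
class `1`): the `i`-th vertex of class `0` has upper-right corner `(i, i - n₁)` and
lower-left corner `(U(2,v) + 1/2 - n₂, U(1,v) - 1/2 - n₁)`; the `i`-th vertex of class
`1` has upper-right corner `(i - n₂, i)` and lower-left corner
`(U(2,v) - 1/2 - n₂, U(1,v) + 1/2 - n₁)`. -/
noncomputable def M1 {V : Type*} (G : SimpleGraph V) (c : V → Fin 2) (f : V → ℕ)
    (v : V) : Box := by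
  classical
  exact if c v = 0 then
    { x1 := (Uoth G c f v : ℝ) + 1/2 - (nclass c 1 : ℝ)
      x2 := (rnk c f v : ℝ)
      y1 := (Uown G c f v : ℝ) - 1/2 - (nclass c 0 : ℝ)
      y2 := (rnk c f v : ℝ) - (nclass c 0 : ℝ) }
  else
    { x1 := (Uown G c f v : ℝ) - 1/2 - (nclass c 1 : ℝ)
      x2 := (rnk c f v : ℝ) - (nclass c 1 : ℝ)
      y1 := (Uoth G c f v : ℝ) + 1/2 - (nclass c 0 : ℝ)
      y2 := (rnk c f v : ℝ) }

section Aux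

variable {V : Type*} [Fintype V] {G : SimpleGraph V} {c : V → Fin 2} {f : V → ℕ}

lemma fin2_cases (a : Fin 2) : a = 0 ∨ a = 1 := by omega

lemma fin2_eq_of_ne_ne {a b x : Fin 2} (ha : a ≠ x) (hb : b ≠ x) : a = b := by omega

lemma rnk_pos (v : V) : 0 < rnk c f v :=
  (Set.ncard_pos (Set.toFinite _)).mpr ⟨v, rfl, le_refl _⟩

lemma rnk_le_nclass (v : V) : rnk c f v ≤ nclass c (c v) :=
  Set.ncard_le_ncard (fun u hu => hu.1) (Set.toFinite _)

lemma rnk_le_card (v : V) : rnk c f v ≤ Fintype.card V := by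
  have := Set.ncard_le_ncard (Set.subset_univ {u : V | c u = c v ∧ f u ≤ f v})
    Set.finite_univ
  simpa [rnk, Set.ncard_univ, Nat.card_eq_fintype_card] using this

lemma rnk_lt_rnk {u v : V} (h : c u = c v) (hlt : f u < f v) :
    rnk c f u < rnk c f v := by
  apply Set.ncard_lt_ncard _ (Set.toFinite _)
  constructor
  · rintro w ⟨hw1, hw2⟩
    exact ⟨hw1.trans h, hw2.trans hlt.le⟩
  · intro hsub
    have := hsub (⟨rfl, le_refl _⟩ : v ∈ {w : V | c w = c v ∧ f w ≤ f v})
    exact absurd this.2 (not_le.mpr hlt)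

lemma rnk_le_rnk_iff (hf : Function.Injective f) {u v : V} (h : c u = c v) :
    rnk c f u ≤ rnk c f v ↔ f u ≤ f v := by
  constructor
  · intro hle
    by_contra hc
    push_neg at hc
    exact absurd hle (not_le.mpr (rnk_lt_rnk h.symm hc))
  · intro hle
    rcases lt_or_eq_of_le hle with hlt | heq
    · exact (rnk_lt_rnk h hlt).le
    · rw [hf heq]

lemma Uown_le_rnk (G : SimpleGraph V) (c : V → Fin 2) (f : V → ℕ) (v : V) :
    Uown G c f v ≤ rnk c f v := by
  unfold Uown
  split_ifs with h
  · obtain ⟨u, hcu, hfu, hadj⟩ := h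
    exact le_trans (Nat.sInf_le ⟨u, hcu, hfu, hadj, rfl⟩) (rnk_lt_rnk hcu hfu).le
  · exact le_refl _

lemma Uown_pos (G : SimpleGraph V) (c : V → Fin 2) (f : V → ℕ) (v : V) :
    0 < Uown G c f v := by
  unfold Uown
  split_ifs with h
  · obtain ⟨u, hcu, hfu, hadj⟩ := h
    obtain ⟨w, _, _, _, hw⟩ := Nat.sInf_mem (⟨rnk c f u, u, hcu, hfu, hadj, rfl⟩ :
      Set.Nonempty {j | ∃ u, c u = c v ∧ f u < f v ∧ G.Adj u v ∧ j = rnk c f u})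
    rw [hw]; exact rnk_pos w
  · exact rnk_pos v

lemma adj_iff_Uown_le (hf : Function.Injective f) (hcons : ConsistentWith G f c)
    {u v : V} (h : c u = c v) (hlt : f u < f v) :
    G.Adj u v ↔ Uown G c f v ≤ rnk c f u := by
  constructor
  · intro hadj
    unfold Uown
    rw [if_pos ⟨u, h, hlt, hadj⟩]
    exact Nat.sInf_le ⟨u, h, hlt, hadj, rfl⟩
  · intro hle
    by_cases hex : ∃ u', c u' = c v ∧ f u' < f v ∧ G.Adj u' v
    · unfold Uown at hle
      rw [if_pos hex] at hle
      obtain ⟨u₀, hc₀, hf₀, ha₀⟩ := hex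
      obtain ⟨w, hcw, hfw, hadjw, hw⟩ := Nat.sInf_mem (⟨rnk c f u₀, u₀, hc₀, hf₀, ha₀, rfl⟩ :
        Set.Nonempty {j | ∃ u, c u = c v ∧ f u < f v ∧ G.Adj u v ∧ j = rnk c f u})
      rw [hw] at hle
      have hcwu : c w = c u := hcw.trans h.symm
      have hfle : f w ≤ f u := (rnk_le_rnk_iff hf hcwu).mp hle
      rcases lt_or_eq_of_le hfle with hflt | hfeq
      · exact (hcons w u v hflt hlt hcwu hadjw.symm).symm
      · rw [hf hfeq] at hadjw; exact hadjw
    · unfold Uown at hle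
      rw [if_neg hex] at hle
      exact absurd hle (not_le.mpr (rnk_lt_rnk h hlt))

lemma Uoth_bddAbove (G : SimpleGraph V) (c : V → Fin 2) (f : V → ℕ) (v : V) :
    BddAbove {j | ∃ u, c u ≠ c v ∧ f u < f v ∧ ¬ G.Adj u v ∧ j = rnk c f u} := by
  refine ⟨Fintype.card V, ?_⟩
  rintro j ⟨u, _, _, _, rfl⟩
  exact rnk_le_card u

lemma le_Uoth {u v : V} (hne : c u ≠ c v) (hlt : f u < f v) (hnadj : ¬ G.Adj u v) :
    rnk c f u ≤ Uoth G c f v :=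
  le_csSup (Uoth_bddAbove G c f v) ⟨u, hne, hlt, hnadj, rfl⟩

lemma Uoth_lt_of_adj (hf : Function.Injective f) (hcons : ConsistentWith G f c)
    {u v : V} (hne : c u ≠ c v) (hadj : G.Adj u v) :
    Uoth G c f v < rnk c f u := by
  by_cases hS : Set.Nonempty {j | ∃ u, c u ≠ c v ∧ f u < f v ∧ ¬ G.Adj u v ∧ j = rnk c f u}
  · obtain ⟨w, hcw, hfw, hnadj, hw⟩ := Nat.sSup_mem hS (Uoth_bddAbove G c f v)
    unfold Uoth
    rw [hw]
    by_contra hc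
    push_neg at hc
    have hcuw : c u = c w := fin2_eq_of_ne_ne hne hcw
    have hfle : f u ≤ f w := (rnk_le_rnk_iff hf hcuw).mp hc
    rcases lt_or_eq_of_le hfle with hflt | hfeq
    · exact hnadj ((hcons u w v hflt hfw hcuw hadj.symm).symm)
    · rw [hf hfeq] at hadj; exact hnadj hadj
  · unfold Uoth
    rw [Set.not_nonempty_iff_eq_empty] at hS
    rw [hS, csSup_empty]
    exact rnk_pos u

lemma Uoth_le_nclass {v : V} {j : Fin 2} (hj : j ≠ c v) :
    Uoth G c f v ≤ nclass c j := by
  by_cases hS : Set.Nonempty {j | ∃ u, c u ≠ c v ∧ f u < f v ∧ ¬ G.Adj u v ∧ j = rnk c f u}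
  · apply csSup_le hS
    rintro k ⟨u, hcu, _, _, rfl⟩
    have : c u = j := fin2_eq_of_ne_ne hcu hj
    rw [← this]
    exact rnk_le_nclass u
  · unfold Uoth
    rw [Set.not_nonempty_iff_eq_empty] at hS
    rw [hS, csSup_empty]
    exact Nat.zero_le _

lemma Uoth_mem_of_ne_zero {v : V} (h : Uoth G c f v ≠ 0) :
    ∃ a, c a ≠ c v ∧ f a < f v ∧ ¬ G.Adj a v ∧ Uoth G c f v = rnk c f a := by
  by_cases hS : Set.Nonempty {j | ∃ u, c u ≠ c v ∧ f u < f v ∧ ¬ G.Adj u v ∧ j = rnk c f u}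
  · exact Nat.sSup_mem hS (Uoth_bddAbove G c f v)
  · exfalso
    apply h
    unfold Uoth
    rw [Set.not_nonempty_iff_eq_empty] at hS
    rw [hS, csSup_empty]
    rfl

lemma Uoth_mono (hrev : RevConsistentWith G f c) {u v : V}
    (h : c u = c v) (hlt : f u < f v) : Uoth G c f u ≤ Uoth G c f v := by
  by_cases h0 : Uoth G c f u = 0
  · rw [h0]; exact Nat.zero_le _
  · obtain ⟨a, hca, hfa, hnadj, heq⟩ := Uoth_mem_of_ne_zero h0
    rw [heq]
    apply le_Uoth (h ▸ hca) (hfa.trans hlt)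
    intro hadj
    exact hnadj (hrev a u v hfa hlt h hadj)

lemma Uown_mono (hf : Function.Injective f) (hrev : RevConsistentWith G f c) {u v : V}
    (h : c u = c v) (hlt : f u < f v) : Uown G c f u ≤ Uown G c f v := by
  by_cases hv : ∃ w, c w = c v ∧ f w < f v ∧ G.Adj w v
  · obtain ⟨w₀, hc₀, hf₀, ha₀⟩ := hv
    have hUv : Uown G c f v = sInf {j | ∃ u, c u = c v ∧ f u < f v ∧ G.Adj u v ∧ j = rnk c f u} := by
      unfold Uown; rw [if_pos ⟨w₀, hc₀, hf₀, ha₀⟩]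
    obtain ⟨w, hcw, hfw, hadjw, hw⟩ := Nat.sInf_mem (⟨rnk c f w₀, w₀, hc₀, hf₀, ha₀, rfl⟩ :
      Set.Nonempty {j | ∃ u, c u = c v ∧ f u < f v ∧ G.Adj u v ∧ j = rnk c f u})
    rw [hUv, hw]
    rcases lt_trichotomy (f w) (f u) with h1 | h1 | h1
    · -- w is a smaller same-class neighbor of u
      have hadju : G.Adj w u := hrev w u v h1 hlt h hadjw
      have hcwu : c w = c u := hcw.trans h.symm
      calc Uown G c f u ≤ rnk c f w := by
            unfold Uown
            rw [if_pos ⟨w, hcwu, h1, hadju⟩]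
            exact Nat.sInf_le ⟨w, hcwu, h1, hadju, rfl⟩
        _ = rnk c f w := rfl
    · have : w = u := hf h1
      rw [this]
      exact Uown_le_rnk G c f u
    · exact le_trans (Uown_le_rnk G c f u)
        (rnk_lt_rnk (h.trans hcw.symm) h1).le
  · have hUv : Uown G c f v = rnk c f v := by unfold Uown; rw [if_neg hv]
    rw [hUv]
    exact le_trans (Uown_le_rnk G c f u) (rnk_lt_rnk h hlt).le

lemma box_inter_iff (b b' : Box) (h1 : b.x1 ≤ b.x2) (h2 : b.y1 ≤ b.y2)
    (h3 : b'.x1 ≤ b'.x2) (h4 : b'.y1 ≤ b'.y2) :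
    (b.toSet ∩ b'.toSet).Nonempty ↔
      b.x1 ≤ b'.x2 ∧ b'.x1 ≤ b.x2 ∧ b.y1 ≤ b'.y2 ∧ b'.y1 ≤ b.y2 := by
  constructor
  · rintro ⟨⟨x, y⟩, hp, hq⟩
    simp only [Box.toSet, Set.mem_prod, Set.mem_Icc] at hp hq
    exact ⟨le_trans hp.1.1 hq.1.2, le_trans hq.1.1 hp.1.2,
      le_trans hp.2.1 hq.2.2, le_trans hq.2.1 hp.2.2⟩
  · rintro ⟨ha, hb, hc, hd⟩
    refine ⟨(max b.x1 b'.x1, max b.y1 b'.y1), ?_, ?_⟩ <;>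
      simp only [Box.toSet, Set.mem_prod, Set.mem_Icc]
    · exact ⟨⟨le_max_left _ _, max_le h1 hb⟩, le_max_left _ _, max_le h2 hd⟩
    · exact ⟨⟨le_max_right _ _, max_le ha h3⟩, le_max_right _ _, max_le hc h4⟩

lemma vert_inter_iff (b b' : Box) (h1 : b.x1 ≤ b.x2) (h3 : b'.x1 ≤ b'.x2)
    (h4 : b'.y1 ≤ b'.y2) :
    (b.vert ∩ b'.toSet).Nonempty ↔ b.x1 ≤ b'.x2 ∧ b'.x1 ≤ b.x2 := by
  constructor
  · rintro ⟨⟨x, y⟩, hp, hq⟩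
    simp only [Box.vert, Box.toSet, Set.mem_prod, Set.mem_Icc] at hp hq
    exact ⟨le_trans hp.1.1 hq.1.2, le_trans hq.1.1 hp.1.2⟩
  · rintro ⟨ha, hb⟩
    refine ⟨(max b.x1 b'.x1, b'.y1), ?_, ?_⟩ <;>
      simp only [Box.vert, Box.toSet, Set.mem_prod, Set.mem_Icc, Set.mem_univ, and_true]
    · exact ⟨le_max_left _ _, max_le h1 hb⟩
    · exact ⟨⟨le_max_right _ _, max_le ha h3⟩, le_refl _, h4⟩

lemma horiz_inter_iff (b b' : Box) (h2 : b.y1 ≤ b.y2) (h3 : b'.x1 ≤ b'.x2)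
    (h4 : b'.y1 ≤ b'.y2) :
    (b.horiz ∩ b'.toSet).Nonempty ↔ b.y1 ≤ b'.y2 ∧ b'.y1 ≤ b.y2 := by
  constructor
  · rintro ⟨⟨x, y⟩, hp, hq⟩
    simp only [Box.horiz, Box.toSet, Set.mem_prod, Set.mem_Icc] at hp hq
    exact ⟨le_trans hp.2.1 hq.2.2, le_trans hq.2.1 hp.2.2⟩
  · rintro ⟨ha, hb⟩
    refine ⟨(b'.x1, max b.y1 b'.y1), ?_, ?_⟩ <;>
      simp only [Box.horiz, Box.toSet, Set.mem_prod, Set.mem_Icc, Set.mem_univ, true_and]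
    · exact ⟨le_max_left _ _, max_le h2 hb⟩
    · exact ⟨⟨le_refl _, h3⟩, le_max_right _ _, max_le ha h4⟩

lemma M1_of_eq0 (G : SimpleGraph V) (c : V → Fin 2) (f : V → ℕ) {v : V} (hv : c v = 0) :
    M1 G c f v =
      { x1 := (Uoth G c f v : ℝ) + 1/2 - (nclass c 1 : ℝ)
        x2 := (rnk c f v : ℝ)
        y1 := (Uown G c f v : ℝ) - 1/2 - (nclass c 0 : ℝ)
        y2 := (rnk c f v : ℝ) - (nclass c 0 : ℝ) } := by
  unfold M1; rw [if_pos hv]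

lemma M1_of_eq1 (G : SimpleGraph V) (c : V → Fin 2) (f : V → ℕ) {v : V} (hv : c v = 1) :
    M1 G c f v =
      { x1 := (Uown G c f v : ℝ) - 1/2 - (nclass c 1 : ℝ)
        x2 := (rnk c f v : ℝ) - (nclass c 1 : ℝ)
        y1 := (Uoth G c f v : ℝ) + 1/2 - (nclass c 0 : ℝ)
        y2 := (rnk c f v : ℝ) } := by
  unfold M1; rw [if_neg (by rw [hv]; decide)]

lemma cast_add_half_le {a b : ℕ} : (a : ℝ) + 1/2 ≤ (b : ℝ) ↔ a < b := by
  constructor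
  · intro h
    have : (a : ℝ) < b := by linarith
    exact_mod_cast this
  · intro h
    have : (a : ℝ) + 1 ≤ b := by exact_mod_cast h
    linarith

lemma cast_sub_half_le {a b : ℕ} : (a : ℝ) - 1/2 ≤ (b : ℝ) ↔ a ≤ b := by
  constructor
  · intro h
    have : (a : ℝ) < b + 1 := by linarith
    have := ((Nat.cast_lt (α := ℝ)).mp (by push_cast; linarith : (a : ℝ) < ((b + 1 : ℕ) : ℝ)))
    omega
  · intro h
    have : (a : ℝ) ≤ b := by exact_mod_cast h
    linarith

end Aux

/-- Let `G` be a 2-thin graph with class partition given by `c` consistent with the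
ordering given by `f` (both classes nonempty). Then the explicit model `M₁(G)` is a
blocking 2-diagonal box intersection model of `G` respecting the relative order on each
class; moreover, if the order and the partition are strongly consistent, the model is
bi-semi-proper. -/
theorem M1_blocking_twoDiagonal_model {V : Type*} [Fintype V] (G : SimpleGraph V)
    (f : V → ℕ) (hf : Function.Injective f) (c : V → Fin 2)
    (hcons : ConsistentWith G f c)
    (h0 : ∃ v, c v = 0) (h1 : ∃ v, c v = 1) :
    TwoDiagonal (M1 G c f) (-(nclass c 0 : ℝ)) (nclass c 1 : ℝ) ∧
    Blocking (M1 G c f) (-(nclass c 0 : ℝ)) (nclass c 1 : ℝ) ∧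
    IsBoxModel G (M1 G c f) ∧
    (∀ u v : V, c u = c v → f u < f v → (M1 G c f u).x2 < (M1 G c f v).x2) ∧
    (RevConsistentWith G f c → BiSemiProper (M1 G c f)) := by
  classical
  obtain ⟨v0, hv0⟩ := h0
  obtain ⟨v1, hv1⟩ := h1
  have hn0 : 0 < nclass c 0 := (Set.ncard_pos (Set.toFinite _)).mpr ⟨v0, hv0⟩
  have hn1 : 0 < nclass c 1 := (Set.ncard_pos (Set.toFinite _)).mpr ⟨v1, hv1⟩
  have hn0R : (1 : ℝ) ≤ (nclass c 0 : ℝ) := by exact_mod_cast hn0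
  have hn1R : (1 : ℝ) ≤ (nclass c 1 : ℝ) := by exact_mod_cast hn1
  have hrnk1 : ∀ v : V, (1 : ℝ) ≤ (rnk c f v : ℝ) := fun v => by
    exact_mod_cast rnk_pos (c := c) (f := f) v
  have hUoto0 : ∀ v : V, c v = 0 → (Uoth G c f v : ℝ) ≤ (nclass c 1 : ℝ) := by
    intro v hv
    exact_mod_cast Uoth_le_nclass (G := G) (f := f) (by rw [hv]; decide)
  have hUoto1 : ∀ v : V, c v = 1 → (Uoth G c f v : ℝ) ≤ (nclass c 0 : ℝ) := by
    intro v hv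
    exact_mod_cast Uoth_le_nclass (G := G) (f := f) (by rw [hv]; decide)
  have hUuR : ∀ v : V, (Uown G c f v : ℝ) ≤ (rnk c f v : ℝ) := fun v => by
    exact_mod_cast Uown_le_rnk G c f v
  have hrnkn0 : ∀ v : V, c v = 0 → (rnk c f v : ℝ) ≤ (nclass c 0 : ℝ) := by
    intro v hv
    have := rnk_le_nclass (c := c) (f := f) v
    rw [hv] at this
    exact_mod_cast this
  have hrnkn1 : ∀ v : V, c v = 1 → (rnk c f v : ℝ) ≤ (nclass c 1 : ℝ) := by
    intro v hv
    have := rnk_le_nclass (c := c) (f := f) v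
    rw [hv] at this
    exact_mod_cast this
  have rnk_inj : ∀ u v : V, c u = c v → rnk c f u = rnk c f v → u = v := by
    intro u v hc h
    exact hf (le_antisymm ((rnk_le_rnk_iff hf hc).mp h.le)
      ((rnk_le_rnk_iff hf hc.symm).mp h.ge))
  have hbnd : ∀ v : V, (M1 G c f v).x1 ≤ (M1 G c f v).x2 ∧
      (M1 G c f v).y1 ≤ (M1 G c f v).y2 := by
    intro v
    rcases fin2_cases (c v) with hv | hv
    · rw [M1_of_eq0 G c f hv]; dsimp only
      constructor
      · linarith [hUoto0 v hv, hrnk1 v]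
      · linarith [hUuR v]
    · rw [M1_of_eq1 G c f hv]; dsimp only
      constructor
      · linarith [hUuR v, hrnkn1 v hv]
      · linarith [hUoto1 v hv, hrnk1 v]
  refine ⟨?_, ?_, ?_, ?_, ?_⟩
  · -- TwoDiagonal
    refine ⟨by linarith, by linarith, ?_, ?_⟩
    · intro u v huv heq
      rw [Prod.mk.injEq] at heq
      obtain ⟨hx, hy⟩ := heq
      rcases fin2_cases (c u) with hu | hu <;> rcases fin2_cases (c v) with hv' | hv'
      · rw [M1_of_eq0 G c f hu, M1_of_eq0 G c f hv'] at hx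
        dsimp only at hx
        exact huv (rnk_inj u v (hu.trans hv'.symm) (by exact_mod_cast hx))
      · rw [M1_of_eq0 G c f hu, M1_of_eq1 G c f hv'] at hy
        dsimp only at hy
        linarith [hrnkn0 u hu, hrnk1 v]
      · rw [M1_of_eq1 G c f hu, M1_of_eq0 G c f hv'] at hy
        dsimp only at hy
        linarith [hrnkn0 v hv', hrnk1 u]
      · rw [M1_of_eq1 G c f hu, M1_of_eq1 G c f hv'] at hx
        dsimp only at hx
        have : (rnk c f u : ℝ) = rnk c f v := by linarith
        exact huv (rnk_inj u v (hu.trans hv'.symm) (by exact_mod_cast this))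
    · intro v
      rcases fin2_cases (c v) with hv | hv
      · left
        rw [M1_of_eq0 G c f hv]; dsimp only
        refine ⟨by ring, by positivity, by linarith [hrnkn0 v hv]⟩
      · right
        rw [M1_of_eq1 G c f hv]; dsimp only
        refine ⟨by ring, by linarith [hrnkn1 v hv], by linarith [hrnk1 v]⟩
  · -- Blocking
    intro u v hu hv _hnon
    have hcu : c u = 1 := by
      rcases fin2_cases (c u) with h | h
      · exfalso
        rw [M1_of_eq0 G c f h] at hu
        dsimp only at hu
        linarith
      · exact h
    have hcv : c v = 0 := by
      rcases fin2_cases (c v) with h | h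
      · exact h
      · exfalso
        rw [M1_of_eq1 G c f h] at hv
        dsimp only at hv
        linarith
    have hne : c u ≠ c v := by rw [hcu, hcv]; decide
    have key : Uoth G c f v < rnk c f u ∨ Uoth G c f u < rnk c f v := by
      by_contra hcon
      push_neg at hcon
      obtain ⟨hA, hB⟩ := hcon
      have hru := rnk_pos (c := c) (f := f) u
      have hrv := rnk_pos (c := c) (f := f) v
      obtain ⟨a, hca, hfa, _, hea⟩ := Uoth_mem_of_ne_zero (G := G) (c := c) (f := f) (v := v) (by omega)
      obtain ⟨b, hcb, hfb, _, heb⟩ := Uoth_mem_of_ne_zero (G := G) (c := c) (f := f) (v := u) (by omega)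
      have hcua : c u = c a := fin2_eq_of_ne_ne hne hca
      have hcvb : c v = c b := fin2_eq_of_ne_ne (Ne.symm hne) hcb
      have h1 : f u ≤ f a := (rnk_le_rnk_iff hf hcua).mp (by omega)
      have h2 : f v ≤ f b := (rnk_le_rnk_iff hf hcvb).mp (by omega)
      omega
    rcases key with hk | hk
    · left
      rw [vert_inter_iff _ _ (hbnd u).1 (hbnd v).1 (hbnd v).2]
      rw [M1_of_eq1 G c f hcu, M1_of_eq0 G c f hcv]
      dsimp only
      have hk' := cast_add_half_le.mpr hk
      exact ⟨by linarith [hUuR u, hrnkn1 u hcu, hrnk1 v], by linarith⟩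
    · right
      rw [horiz_inter_iff _ _ (hbnd v).2 (hbnd u).1 (hbnd u).2]
      rw [M1_of_eq0 G c f hcv, M1_of_eq1 G c f hcu]
      dsimp only
      have hk' := cast_add_half_le.mpr hk
      exact ⟨by linarith [hUuR v, hrnkn0 v hcv, hrnk1 u], by linarith⟩
  · -- IsBoxModel
    refine ⟨hbnd, ?_⟩
    have main : ∀ u v : V, f u < f v →
        (G.Adj u v ↔ ((M1 G c f u).toSet ∩ (M1 G c f v).toSet).Nonempty) := by
      intro u v hlt
      rw [box_inter_iff _ _ (hbnd u).1 (hbnd u).2 (hbnd v).1 (hbnd v).2]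
      rcases fin2_cases (c u) with hu | hu <;> rcases fin2_cases (c v) with hv' | hv'
      · -- both class 0
        rw [M1_of_eq0 G c f hu, M1_of_eq0 G c f hv']
        dsimp only
        rw [adj_iff_Uown_le hf hcons (hu.trans hv'.symm) hlt]
        constructor
        · intro h
          have h4 : (Uown G c f v : ℝ) - 1/2 ≤ (rnk c f u : ℝ) := cast_sub_half_le.mpr h
          have hUu : Uown G c f u ≤ rnk c f v :=
            le_trans (Uown_le_rnk G c f u) (rnk_lt_rnk (hu.trans hv'.symm) hlt).le
          have hUu' := cast_sub_half_le.mpr hUu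
          refine ⟨?_, ?_, by linarith, by linarith⟩
          · linarith [hUoto0 u hu, hrnk1 v]
          · linarith [hUoto0 v hv', hrnk1 u]
        · rintro ⟨-, -, -, h4⟩
          exact cast_sub_half_le.mp (by linarith)
      · -- u class 0, v class 1
        rw [M1_of_eq0 G c f hu, M1_of_eq1 G c f hv']
        dsimp only
        have hne : c u ≠ c v := by rw [hu, hv']; decide
        constructor
        · intro hadj
          have hA := cast_add_half_le.mpr (Uoth_lt_of_adj hf hcons hne hadj)
          have hB := cast_add_half_le.mpr (Uoth_lt_of_adj hf hcons (Ne.symm hne) hadj.symm)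
          refine ⟨by linarith, ?_, ?_, by linarith⟩
          · linarith [hUuR v, hrnkn1 v hv', hrnk1 u]
          · linarith [hUuR u, hrnkn0 u hu, hrnk1 v]
        · rintro ⟨-, -, -, h4⟩
          by_contra hnadj
          have hle : (rnk c f u : ℝ) ≤ (Uoth G c f v : ℝ) := by
            exact_mod_cast le_Uoth hne hlt hnadj
          linarith
      · -- u class 1, v class 0
        rw [M1_of_eq1 G c f hu, M1_of_eq0 G c f hv']
        dsimp only
        have hne : c u ≠ c v := by rw [hu, hv']; decide
        constructor
        · intro hadj
          have hA := cast_add_half_le.mpr (Uoth_lt_of_adj hf hcons hne hadj)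
          have hB := cast_add_half_le.mpr (Uoth_lt_of_adj hf hcons (Ne.symm hne) hadj.symm)
          refine ⟨?_, by linarith, by linarith, ?_⟩
          · linarith [hUuR u, hrnkn1 u hu, hrnk1 v]
          · linarith [hUuR v, hrnkn0 v hv', hrnk1 u]
        · rintro ⟨-, h2, -, -⟩
          by_contra hnadj
          have hle : (rnk c f u : ℝ) ≤ (Uoth G c f v : ℝ) := by
            exact_mod_cast le_Uoth hne hlt hnadj
          linarith
      · -- both class 1
        rw [M1_of_eq1 G c f hu, M1_of_eq1 G c f hv']
        dsimp only
        rw [adj_iff_Uown_le hf hcons (hu.trans hv'.symm) hlt]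
        constructor
        · intro h
          have h2 : (Uown G c f v : ℝ) - 1/2 ≤ (rnk c f u : ℝ) := cast_sub_half_le.mpr h
          have hUu : Uown G c f u ≤ rnk c f v :=
            le_trans (Uown_le_rnk G c f u) (rnk_lt_rnk (hu.trans hv'.symm) hlt).le
          have hUu' := cast_sub_half_le.mpr hUu
          refine ⟨by linarith, by linarith, ?_, ?_⟩
          · linarith [hUoto1 u hu, hrnk1 v]
          · linarith [hUoto1 v hv', hrnk1 u]
        · rintro ⟨-, h2, -, -⟩
          exact cast_sub_half_le.mp (by linarith)
    intro u v huv
    rcases (hf.ne huv).lt_or_gt with h | h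
    · exact main u v h
    · rw [G.adj_comm, Set.inter_comm]
      exact main v u h
  · -- x2 strictly monotone on classes
    intro u v hc hlt
    have hr := rnk_lt_rnk hc hlt
    have hrR : (rnk c f u : ℝ) < (rnk c f v : ℝ) := by exact_mod_cast hr
    rcases fin2_cases (c u) with hu | hu
    · have hv' : c v = 0 := hc.symm.trans hu
      rw [M1_of_eq0 G c f hu, M1_of_eq0 G c f hv']
      dsimp only
      exact hrR
    · have hv' : c v = 1 := hc.symm.trans hu
      rw [M1_of_eq1 G c f hu, M1_of_eq1 G c f hv']
      dsimp only
      linarith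
  · -- BiSemiProper
    intro hrev u v hdiag hx2
    have hsame : c u = c v := by
      rcases fin2_cases (c u) with hu | hu <;> rcases fin2_cases (c v) with hv' | hv'
      · exact hu.trans hv'.symm
      · exfalso
        rw [M1_of_eq0 G c f hu, M1_of_eq1 G c f hv'] at hdiag
        dsimp only at hdiag
        linarith
      · exfalso
        rw [M1_of_eq1 G c f hu, M1_of_eq0 G c f hv'] at hdiag
        dsimp only at hdiag
        linarith
      · exact hu.trans hv'.symm
    have hflt : f u < f v := by
      have hrlt : rnk c f u < rnk c f v := by
        rcases fin2_cases (c u) with hu | hu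
        · have hv' : c v = 0 := hsame.symm.trans hu
          rw [M1_of_eq0 G c f hu, M1_of_eq0 G c f hv'] at hx2
          dsimp only at hx2
          exact_mod_cast hx2
        · have hv' : c v = 1 := hsame.symm.trans hu
          rw [M1_of_eq1 G c f hu, M1_of_eq1 G c f hv'] at hx2
          dsimp only at hx2
          have : (rnk c f u : ℝ) < (rnk c f v : ℝ) := by linarith
          exact_mod_cast this
      by_contra h
      push_neg at h
      exact absurd hrlt (not_lt.mpr ((rnk_le_rnk_iff hf hsame.symm).mpr h))
    have hUo : (Uoth G c f u : ℝ) ≤ (Uoth G c f v : ℝ) := by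
      exact_mod_cast Uoth_mono hrev hsame hflt
    have hUw : (Uown G c f u : ℝ) ≤ (Uown G c f v : ℝ) := by
      exact_mod_cast Uown_mono hf hrev hsame hflt
    rcases fin2_cases (c u) with hu | hu
    · have hv' : c v = 0 := hsame.symm.trans hu
      rw [M1_of_eq0 G c f hu, M1_of_eq0 G c f hv']
      dsimp only
      exact ⟨by linarith, by linarith⟩
    · have hv' : c v = 1 := hsame.symm.trans hu
      rw [M1_of_eq1 G c f hu, M1_of_eq1 G c f hv']
      dsimp only
      exact ⟨by linarith, by linarith⟩
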